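/- For every integer k ≥ 0, every complex t, and every complex z with |z| < 1, ∑_{m=0}^∞ k! · P_m^{(k)}(t) · (−z)^m/m! = (−1)^k · (1+z)^{−t} · [log(1+z)]^k, where (1+z)^{−t} and log(1+z) are taken with the principal branch. -/

import Mathlib

open scoped BigOperators

/-- The reciprocal of the complex Gamma function, an entire function
(Mathlib's `Complex.Gamma` vanishes at nonpositive integers, so the inverse is `0` there). -/
noncomputable def Grec (t : ℂ) : ℂ := (Complex.Gamma t)⁻¹

/-- `G k t` is the `k`-th derivative of the reciprocal Gamma function at `t`. -/
noncomputable def G (k : ℕ) (t : ℂ) : ℂ := iteratedDeriv k Grec t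

/-- The Maclaurin coefficients of `1/Γ`: `c j = G^{(j)}(0)/j!`. -/
noncomputable def mcCoeff (j : ℕ) : ℂ := iteratedDeriv j Grec 0 / (j.factorial : ℂ)

/-- Bessel function of the first kind `J_ν(z)` for real `z > 0` and complex order `ν`,
with `(z/2)^ν = exp (ν log (z/2))`. -/
noncomputable def besselJ (z : ℝ) (ν : ℂ) : ℂ :=
  Complex.exp (ν * Complex.log ((z : ℂ) / 2)) *
    ∑' m : ℕ, (-(z : ℂ) ^ 2 / 4) ^ m / ((m.factorial : ℂ) * Complex.Gamma (ν + 1 + m))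

/-- Pochhammer symbol `(t)_m = t (t+1) ⋯ (t+m-1)`. -/
noncomputable def poch (t : ℂ) (m : ℕ) : ℂ := ∏ i ∈ Finset.range m, (t + i)

/-- `P m k t = (1/k!) dᵏ/dtᵏ (t)_m`. -/
noncomputable def P (m k : ℕ) (t : ℂ) : ℂ :=
  ((k.factorial : ℂ))⁻¹ * iteratedDeriv k (fun s => poch s m) t

/-- `Q m k t = (1/k!) dᵏ/dtᵏ (1/(t)_m)`. -/
noncomputable def Q (m k : ℕ) (t : ℂ) : ℂ :=
  ((k.factorial : ℂ))⁻¹ * iteratedDeriv k (fun s => (poch s m)⁻¹) t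

/-- Signed Stirling numbers of the first kind: `s(n,k)` is the coefficient of `x^k`
in `x(x-1)⋯(x-n+1)`. -/
noncomputable def stirS (n k : ℕ) : ℤ := (descPochhammer ℤ n).coeff k

/-- Modified generalized harmonic numbers `Ĥ_m^{(k)}`. -/
noncomputable def Hhat (m k : ℕ) : ℝ :=
  if m = 0 then (if k = 0 then 1 else 0)
  else ∑ j ∈ Finset.Icc 1 m, (-1 : ℝ) ^ (j - 1) * (m.choose j) / (j : ℝ) ^ k

/-- Digamma function `ψ = Γ'/Γ`. -/
noncomputable def digamma (t : ℂ) : ℂ := deriv Complex.Gamma t / Complex.Gamma t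


open Filter Topology
open scoped ContDiff

lemma poch_zero (s : ℂ) : poch s 0 = 1 := by simp [poch]

lemma poch_succ (s : ℂ) (m : ℕ) : poch s (m+1) = poch s m * (s + m) :=
  Finset.prod_range_succ _ _

lemma natCast_le_infty (k : ℕ) : (k : WithTop ℕ∞) ≤ ∞ := by
  exact_mod_cast le_top (a := (k : ℕ∞))

lemma contDiff_poch (m : ℕ) : ContDiff ℂ ∞ (fun s : ℂ => poch s m) := by
  induction m with
  | zero => simpa [poch] using contDiff_const
  | succ m ih =>
    simp only [poch_succ]
    exact ih.mul (contDiff_id.add contDiff_const)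

lemma iteratedDeriv_add' {f g : ℂ → ℂ} (hf : ContDiff ℂ ∞ f) (hg : ContDiff ℂ ∞ g)
    (k : ℕ) (x : ℂ) :
    iteratedDeriv k (fun s => f s + g s) x = iteratedDeriv k f x + iteratedDeriv k g x := by
  have := iteratedDerivWithin_add (Set.mem_univ x) uniqueDiffOn_univ
    (f := f) (g := g) (n := k)
    ((hf.of_le (natCast_le_infty k)).contDiffWithinAt (s := Set.univ))
    ((hg.of_le (natCast_le_infty k)).contDiffWithinAt (s := Set.univ))
  simp only [iteratedDerivWithin_univ] at this
  exact this

lemma leibniz_lin {f : ℂ → ℂ} (hf : ContDiff ℂ ∞ f) (c : ℂ) (k : ℕ) (t : ℂ) :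
    iteratedDeriv k (fun s => f s * (s + c)) t
      = (t + c) * iteratedDeriv k f t + k * iteratedDeriv (k-1) f t := by
  induction k generalizing f with
  | zero => simp [mul_comm]
  | succ k ih =>
    have hd : Differentiable ℂ f := hf.differentiable (by simp)
    have hf' : ContDiff ℂ ∞ (deriv f) := (contDiff_infty_iff_deriv.mp hf).2
    have step : iteratedDeriv (k+1) (fun s => f s * (s + c)) t
        = iteratedDeriv k (fun s => deriv f s * (s + c) + f s) t := by
      rw [iteratedDeriv_succ']
      congr 1
      funext s
      have : HasDerivAt (fun s => f s * (s + c)) (deriv f s * (s + c) + f s * 1) s :=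
        (hd s).hasDerivAt.mul ((hasDerivAt_id s).add_const c)
      simpa using this.deriv
    have hca : ContDiff ℂ ∞ (fun s : ℂ => deriv f s * (s + c)) :=
      hf'.mul (contDiff_id.add contDiff_const)
    have add := iteratedDeriv_add' (f := fun s => deriv f s * (s + c)) (g := f) hca hf k t
    have e1 : iteratedDeriv k (deriv f) t = iteratedDeriv (k+1) f t :=
      congrFun (iteratedDeriv_succ' (n := k) (f := f)).symm t
    have e2 : (k:ℂ) * iteratedDeriv (k-1) (deriv f) t = (k:ℂ) * iteratedDeriv k f t := by
      rcases k with _ | j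
      · simp
      · rw [Nat.add_sub_cancel]
        congr 1
        exact congrFun (iteratedDeriv_succ' (n := j) (f := f)).symm t
    rw [step, add, ih hf', e1, e2]
    push_cast
    ring

lemma nat_ineq (k m : ℕ) : k * m^(k-1) ≤ (m+1)^k := by
  rcases k with _ | j
  · simp
  · rw [Nat.add_sub_cancel]
    calc (j+1) * m^j = m^j * 1^((j+1)-j) * (j+1).choose j := by
          rw [Nat.choose_succ_self_right]; ring
    _ ≤ (m+1)^(j+1) := by
        rw [add_pow]
        exact Finset.single_le_sum (f := fun i => m^i * 1^((j+1)-i) * (j+1).choose i)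
          (fun i _ => Nat.zero_le _) (Finset.mem_range.mpr (by omega))

lemma pochAux_prod_pos (R : ℝ) (hR : 0 ≤ R) (m : ℕ) :
    0 < ∏ i ∈ Finset.range m, (R + 1 + i) :=
  Finset.prod_pos fun i _ => by positivity

lemma iteratedDeriv_const_fun (j : ℕ) (c : ℂ) :
    iteratedDeriv (j+1) (fun _ : ℂ => c) = fun _ => 0 := by
  induction j generalizing c with
  | zero => funext x; simp [iteratedDeriv_one]
  | succ j ih =>
    rw [iteratedDeriv_succ' (n := j+1)]
    have : (deriv fun _ : ℂ => c) = fun _ : ℂ => (0:ℂ) := by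
      funext x; simp
    rw [this, ih 0]

lemma poch_iteratedDeriv_bound (R : ℝ) (hR : 0 ≤ R) (m : ℕ) :
    ∀ (k : ℕ) (s : ℂ), ‖s‖ ≤ R →
    ‖iteratedDeriv k (fun s => poch s m) s‖
      ≤ ((m:ℝ)+1)^k * ∏ i ∈ Finset.range m, (R + 1 + i) := by
  induction m with
  | zero =>
    intro k s _
    have hc : (fun s : ℂ => poch s 0) = fun _ => (1:ℂ) := by funext w; simp [poch]
    rcases k with _ | j
    · simp [hc]
    · rw [hc, iteratedDeriv_const_fun]
      simp
  | succ m ih =>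
    intro k s hs
    have key : iteratedDeriv k (fun s => poch s (m+1)) s
        = (s + m) * iteratedDeriv k (fun s => poch s m) s
          + k * iteratedDeriv (k-1) (fun s => poch s m) s := by
      have : (fun s => poch s (m+1)) = fun s => poch s m * (s + (m:ℂ)) := by
        funext w; exact poch_succ w m
      rw [this, leibniz_lin (contDiff_poch m) (m:ℂ) k s]
    rw [key]
    set Pm := ∏ i ∈ Finset.range m, (R + 1 + i) with hPm
    have hPmpos := pochAux_prod_pos R hR m
    have h1 := ih k s hs
    have h2 := ih (k-1) s hs
    have hsm : ‖s + (m:ℂ)‖ ≤ R + m := by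
      refine (norm_add_le _ _).trans ?_
      simp only [Complex.norm_natCast]
      exact add_le_add_left hs _
    have hmk : ((m:ℝ)+1)^(k-1) * (k:ℝ) ≤ ((m:ℝ)+2)^k := by
      have h := nat_ineq k (m+1)
      have h' : ((k * (m+1)^(k-1) : ℕ) : ℝ) ≤ (((m+2)^k : ℕ) : ℝ) := by exact_mod_cast h
      push_cast at h'
      linarith [h']
    have hb : ∏ i ∈ Finset.range (m+1), (R + 1 + i)
        = Pm * (R + 1 + m) := by rw [Finset.prod_range_succ]
    rw [hb]
    have hp1 : ((m:ℝ)+1)^k ≤ ((m:ℝ)+2)^k := by gcongr; linarith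
    have e3 : (R + (m:ℝ)) * (((m:ℝ)+1)^k * Pm) ≤ (R + (m:ℝ)) * (((m:ℝ)+2)^k * Pm) := by
      have : (0:ℝ) ≤ R + m := by positivity
      exact mul_le_mul_of_nonneg_left (mul_le_mul_of_nonneg_right hp1 hPmpos.le) this
    have e4 : (k:ℝ) * (((m:ℝ)+1)^(k-1) * Pm) ≤ ((m:ℝ)+2)^k * Pm := by
      calc (k:ℝ) * (((m:ℝ)+1)^(k-1) * Pm) = (((m:ℝ)+1)^(k-1) * (k:ℝ)) * Pm := by ring
      _ ≤ ((m:ℝ)+2)^k * Pm := mul_le_mul_of_nonneg_right hmk hPmpos.le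
    calc ‖(s + m) * iteratedDeriv k (fun s => poch s m) s
          + k * iteratedDeriv (k-1) (fun s => poch s m) s‖
        ≤ ‖(s + (m:ℂ))‖ * ‖iteratedDeriv k (fun s => poch s m) s‖
          + (k:ℝ) * ‖iteratedDeriv (k-1) (fun s => poch s m) s‖ := by
          refine (norm_add_le _ _).trans ?_
          simp [norm_mul]
    _ ≤ (R + m) * (((m:ℝ)+1)^k * Pm) + (k:ℝ) * (((m:ℝ)+1)^(k-1) * Pm) := by
          gcongr <;> first | exact norm_nonneg _ | positivity | exact hsm | exact h1 | exact h2
    _ ≤ ((m:ℝ)+2)^k * (Pm * (R + 1 + m)) := by nlinarith [e3, e4]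
    _ = (((m+1:ℕ):ℝ)+1)^k * (Pm * (R + 1 + m)) := by push_cast; ring

lemma norm_poch_le (t : ℂ) (m : ℕ) : ‖poch t m‖ ≤ ∏ i ∈ Finset.range m, (‖t‖ + 1 + i) := by
  have := poch_iteratedDeriv_bound ‖t‖ (norm_nonneg t) m 0 t le_rfl
  simpa using this

lemma summable_u (R r : ℝ) (hR : 0 ≤ R) (hr0 : 0 < r) (hr1 : r < 1) (k : ℕ) :
    Summable (fun m : ℕ =>
      ((m:ℝ)+1)^k * (∏ i ∈ Finset.range m, (R + 1 + i)) * r^m / m.factorial) := by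
  set u : ℕ → ℝ := fun m =>
    ((m:ℝ)+1)^k * (∏ i ∈ Finset.range m, (R + 1 + i)) * r^m / m.factorial with hu
  have hupos : ∀ m, 0 < u m := by
    intro m
    have := pochAux_prod_pos R hR m
    have : (0:ℝ) < m.factorial := by exact_mod_cast m.factorial_pos
    simp only [hu]
    positivity
  apply summable_of_ratio_test_tendsto_lt_one hr1
  · exact Eventually.of_forall fun n => (hupos n).ne'
  · have heq : (fun n : ℕ => ‖u (n+1)‖ / ‖u n‖)
        = fun n : ℕ => (1 + 1/((n:ℝ)+1))^k * (R * (1/((n:ℝ)+1)) + 1) * r := by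
      funext n
      rw [show (1 + 1/((n:ℝ)+1)) = ((n:ℝ)+1+1)/((n:ℝ)+1) by
        have : ((n:ℝ)+1) ≠ 0 := by positivity
        field_simp, div_pow]
      rw [Real.norm_eq_abs, Real.norm_eq_abs, abs_of_pos (hupos _), abs_of_pos (hupos _)]
      simp only [hu]
      rw [Finset.prod_range_succ, Nat.factorial_succ, pow_succ]
      have h1 : ((n:ℝ)+1) ≠ 0 := by positivity
      have h2 : (∏ i ∈ Finset.range n, (R + 1 + (i:ℝ))) ≠ 0 := (pochAux_prod_pos R hR n).ne'
      have h3 : r^n ≠ 0 := (pow_pos hr0 n).ne'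
      have h4 : ((n.factorial:ℝ)) ≠ 0 := by exact_mod_cast n.factorial_pos.ne'
      have h5 : (((n:ℝ)+1))^k ≠ 0 := by positivity
      push_cast
      field_simp
      ring
    rw [heq]
    have T1 : Tendsto (fun n : ℕ => 1/((n:ℝ)+1)) atTop (𝓝 0) :=
      tendsto_one_div_add_atTop_nhds_zero_nat
    have TA : Tendsto (fun n : ℕ => (1 + 1/((n:ℝ)+1))^k) atTop (𝓝 1) := by
      have := (tendsto_const_nhds (x := (1:ℝ)) (f := atTop (α := ℕ))).add T1
      simpa using this.pow k
    have TB : Tendsto (fun n : ℕ => R * (1/((n:ℝ)+1)) + 1) atTop (𝓝 1) := by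
      have := (T1.const_mul R).add (tendsto_const_nhds (x := (1:ℝ)))
      simpa using this
    have := (TA.mul TB).mul_const r
    simpa using this

lemma one_add_mem_slitPlane {x : ℂ} (hx : ‖x‖ < 1) : (1 + x) ∈ Complex.slitPlane := by
  refine Or.inl ?_
  have : |x.re| ≤ ‖x‖ := Complex.abs_re_le_norm x
  simp only [Complex.add_re, Complex.one_re]
  have := abs_le.mp this
  linarith

lemma one_add_ne_zero {x : ℂ} (hx : ‖x‖ < 1) : (1 + x) ≠ 0 :=
  Complex.slitPlane_ne_zero (one_add_mem_slitPlane hx)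

lemma hasSum_poch_exp (t w : ℂ) (hw : ‖w‖ < 1) :
    HasSum (fun m : ℕ => poch t m * (-1)^m / m.factorial * w^m)
      (Complex.exp (-(t * Complex.log (1+w)))) := by
  classical
  set R := ‖t‖ with hRdef
  have hR : 0 ≤ R := norm_nonneg t
  set c : ℕ → ℂ := fun m => poch t m * (-1)^m / m.factorial with hc
  set g : ℂ → ℂ := fun x => ∑' m, c m * x^m with hgdef
  have hcnorm : ∀ m : ℕ, ‖c m‖ ≤ (∏ i ∈ Finset.range m, (R + 1 + i)) / m.factorial := by
    intro m
    have h1 : ‖c m‖ = ‖poch t m‖ / m.factorial := by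
      simp [hc, norm_div, norm_mul, norm_pow]
    rw [h1]
    have : (0:ℝ) < m.factorial := by exact_mod_cast m.factorial_pos
    exact div_le_div_of_nonneg_right (norm_poch_le t m) this.le |>.trans_eq rfl
  -- uniform bounds on balls
  have hFbound : ∀ r : ℝ, 0 < r → ∀ (m : ℕ) (x : ℂ), x ∈ Metric.ball (0:ℂ) r →
      ‖c m * x^m‖ ≤ (∏ i ∈ Finset.range m, (R + 1 + i)) * r^m / m.factorial := by
    intro r hr m x hx
    rw [Metric.mem_ball, dist_zero_right] at hx
    have : ‖c m * x^m‖ ≤ ((∏ i ∈ Finset.range m, (R + 1 + i)) / m.factorial) * r^m := by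
      rw [norm_mul, norm_pow]
      have h2 : ‖x‖^m ≤ r^m := pow_le_pow_left₀ (norm_nonneg x) hx.le m
      have h0 : (0:ℝ) ≤ (∏ i ∈ Finset.range m, (R + 1 + i)) / m.factorial := by
        have := pochAux_prod_pos R hR m
        have h3 : (0:ℝ) < m.factorial := by exact_mod_cast m.factorial_pos
        positivity
      exact mul_le_mul (hcnorm m) h2 (pow_nonneg (norm_nonneg x) m) h0
    linarith [this, le_of_eq (show ((∏ i ∈ Finset.range m, (R + 1 + i)) / m.factorial) * r^m
      = (∏ i ∈ Finset.range m, (R + 1 + i)) * r^m / m.factorial from by ring)]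
  have hsummable_u : ∀ r : ℝ, 0 < r → r < 1 →
      Summable (fun m : ℕ => (∏ i ∈ Finset.range m, (R + 1 + i)) * r^m / m.factorial) := by
    intro r hr0 hr1
    have := summable_u R r hR hr0 hr1 0
    simpa using this
  -- HasSum at every point of the unit ball
  have hgsum : ∀ x : ℂ, ‖x‖ < 1 → HasSum (fun m => c m * x^m) (g x) := by
    intro x hx
    set r : ℝ := (‖x‖ + 1)/2 with hrdef
    have hr0 : 0 < r := by positivity
    have hr1 : r < 1 := by simp only [hrdef]; linarith
    have hxr : x ∈ Metric.ball (0:ℂ) r := by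
      rw [Metric.mem_ball, dist_zero_right]; simp only [hrdef]; linarith
    have : Summable (fun m => c m * x^m) := by
      apply Summable.of_norm_bounded (hsummable_u r hr0 hr1)
      intro m; exact hFbound r hr0 m x hxr
    exact this.hasSum
  -- derivative of g
  have hgderiv : ∀ x : ℂ, ‖x‖ < 1 →
      HasSum (fun m => c m * ((m:ℂ) * x^(m-1))) (deriv g x) ∧ DifferentiableAt ℂ g x := by
    intro x hx
    set r : ℝ := (‖x‖ + 1)/2 with hrdef
    have hr0 : 0 < r := by positivity
    have hr1 : r < 1 := by simp only [hrdef]; linarith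
    have hxr : x ∈ Metric.ball (0:ℂ) r := by
      rw [Metric.mem_ball, dist_zero_right]; simp only [hrdef]; linarith
    have hdiff : ∀ m : ℕ, DifferentiableOn ℂ (fun y : ℂ => c m * y^m) (Metric.ball (0:ℂ) r) :=
      fun m => ((differentiable_pow m).const_mul (c m)).differentiableOn
    have hds := Complex.hasSum_deriv_of_summable_norm (hsummable_u r hr0 hr1) hdiff
      Metric.isOpen_ball (fun m y hy => hFbound r hr0 m y hy) hxr
    have hdO := Complex.differentiableOn_tsum_of_summable_norm (hsummable_u r hr0 hr1) hdiff
      Metric.isOpen_ball (fun m y hy => hFbound r hr0 m y hy)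
    constructor
    · have heq : (fun m : ℕ => deriv (fun y : ℂ => c m * y^m) x)
          = (fun m : ℕ => c m * ((m:ℂ) * x^(m-1))) := by
        funext m
        exact ((hasDerivAt_pow m x).const_mul (c m)).deriv
      rw [heq] at hds
      exact hds
    · exact (hdO x hxr).differentiableAt (Metric.isOpen_ball.mem_nhds hxr)
  -- the ODE
  have hODE : ∀ x : ℂ, ‖x‖ < 1 → (1 + x) * deriv g x = -t * g x := by
    intro x hx
    obtain ⟨hd, _⟩ := hgderiv x hx
    have hg := hgsum x hx
    have h1 := (hasSum_nat_add_iff'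
      (f := fun m : ℕ => c m * ((m:ℂ) * x^(m-1))) (g := deriv g x) 1).mpr hd
    simp only [Finset.sum_range_one, Nat.cast_zero, zero_mul, mul_zero, sub_zero] at h1
    have hterm : (fun m : ℕ => c (m+1) * ((↑(m+1):ℂ) * x^(m+1-1)))
        = fun m : ℕ => -t * (c m * x^m) - x * (c m * ((m:ℂ) * x^(m-1))) := by
      funext m
      have hfac : ((m+1).factorial : ℂ) = ((m:ℂ)+1) * (m.factorial : ℂ) := by
        rw [Nat.factorial_succ]; push_cast; ring
      have hpoch : poch t (m+1) = poch t m * (t + m) := poch_succ t m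
      have hfm : (m.factorial : ℂ) ≠ 0 := by exact_mod_cast m.factorial_pos.ne'
      have hm1 : ((m:ℂ)+1) ≠ 0 := Nat.cast_add_one_ne_zero m
      rcases m with _ | m
      · simp only [hc]
        rw [poch_succ, poch_zero]
        simp
        try ring
      · simp only [hc, Nat.add_sub_cancel]
        rw [poch_succ t (m+1)]
        rw [Nat.factorial_succ (m+1)]
        have hm2 : ((m:ℂ)+1+1) ≠ 0 := by
          have : ((m:ℂ)+1+1) = ((m+1:ℕ):ℂ)+1 := by push_cast; ring
          rw [this]; exact Nat.cast_add_one_ne_zero (m+1)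
        push_cast
        field_simp [hfm, hm2]
        ring
    rw [hterm] at h1
    have h2 : HasSum (fun m : ℕ => -t * (c m * x^m) - x * (c m * ((m:ℂ) * x^(m-1))))
        (-t * g x - x * deriv g x) := (hg.mul_left (-t)).sub (hd.mul_left x)
    have := h1.unique h2
    linear_combination this
  -- constancy of g x * exp (t log (1+x))
  set E : ℂ → ℂ := fun x => Complex.exp (t * Complex.log (1+x)) with hE
  have hhderiv : ∀ x ∈ Metric.ball (0:ℂ) 1, HasDerivAt (fun y => g y * E y) 0 x := by
    intro x hx
    rw [Metric.mem_ball, dist_zero_right] at hx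
    obtain ⟨_, hgd⟩ := hgderiv x hx
    have hlog : HasDerivAt (fun y : ℂ => Complex.log (1+y)) ((1+x)⁻¹) x := by
      have h1 : HasDerivAt (fun y : ℂ => 1+y) 1 x := by
        simpa using (hasDerivAt_id x).const_add (1:ℂ)
      have h2 := (Complex.hasDerivAt_log (one_add_mem_slitPlane hx)).comp x h1
      rw [mul_one] at h2
      exact h2
    have hEd : HasDerivAt E (E x * (t * (1+x)⁻¹)) x := by
      have := ((hlog.const_mul t).cexp)
      simpa [hE, mul_comm, mul_left_comm] using this
    have hgd' : HasDerivAt g (deriv g x) x := hgd.hasDerivAt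
    have := hgd'.mul hEd
    have hval : deriv g x * E x + g x * (E x * (t * (1+x)⁻¹)) = 0 := by
      have hne : (1+x) ≠ 0 := one_add_ne_zero hx
      have hODEx := hODE x hx
      field_simp
      linear_combination E x * hODEx
    rw [hval] at this
    exact this
  have hconst : ∀ x ∈ Metric.ball (0:ℂ) 1, g x * E x = g 0 * E 0 := by
    intro x hx
    have hconv : Convex ℝ (Metric.ball (0:ℂ) 1) := convex_ball 0 1
    have hdiff : DifferentiableOn ℂ (fun y => g y * E y) (Metric.ball (0:ℂ) 1) :=
      fun y hy => ((hhderiv y hy).differentiableAt).differentiableWithinAt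
    refine hconv.is_const_of_fderivWithin_eq_zero hdiff ?_ hx (by simp)
    intro y hy
    have hfd : fderiv ℂ (fun y => g y * E y) y = 0 := by
      rw [(hhderiv y hy).hasFDerivAt.fderiv]
      ext v
      simp
    rw [fderivWithin_of_isOpen Metric.isOpen_ball hy, hfd]
  -- evaluate at 0
  have hg0 : g 0 = 1 := by
    have hfun : (fun m : ℕ => c m * (0:ℂ)^m) = fun m : ℕ => if m = 0 then (1:ℂ) else 0 := by
      funext m
      rcases m with _ | m
      · simp [hc, poch_zero]
      · simp
    have h1 : HasSum (fun m : ℕ => c m * (0:ℂ)^m) 1 := by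
      rw [hfun]; exact hasSum_ite_eq 0 1
    have h2 := hgsum 0 (by simp)
    exact h2.unique h1
  have hE0 : E 0 = 1 := by simp [hE]
  have hwball : w ∈ Metric.ball (0:ℂ) 1 := by rwa [Metric.mem_ball, dist_zero_right]
  have h3 : g w * E w = 1 := by rw [hconst w hwball, hg0, hE0, one_mul]
  have hEne : E w ≠ 0 := Complex.exp_ne_zero _
  have hgw : g w = Complex.exp (-(t * Complex.log (1+w))) := by
    have h4 : g w = (E w)⁻¹ := by
      field_simp
      linear_combination h3
    rw [h4, hE, ← Complex.exp_neg]
  have hfinal := hgsum w hw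
  rw [hgw] at hfinal
  simpa [hc] using hfinal

lemma differentiable_iteratedDeriv_poch (m k : ℕ) :
    Differentiable ℂ (iteratedDeriv k (fun s : ℂ => poch s m)) := by
  have hk_lt : (k : WithTop ℕ∞) < ∞ := by
    exact_mod_cast WithTop.coe_lt_coe.mpr (WithTop.coe_lt_top k)
  exact (contDiff_poch m).differentiable_iteratedDeriv k hk_lt

lemma main_hasSum (z : ℂ) (hz : ‖z‖ < 1) : ∀ (k : ℕ) (t : ℂ),
    HasSum (fun m : ℕ => iteratedDeriv k (fun s => poch s m) t * (-z)^m / m.factorial)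
      ((-Complex.log (1+z))^k * Complex.exp (-(t * Complex.log (1+z)))) := by
  set L := Complex.log (1+z) with hL
  intro k
  induction k with
  | zero =>
    intro t
    have h := hasSum_poch_exp t z hz
    have heq : (fun m : ℕ => poch t m * (-1)^m / m.factorial * z^m)
        = fun m : ℕ => iteratedDeriv 0 (fun s => poch s m) t * (-z)^m / m.factorial := by
      funext m
      rw [iteratedDeriv_zero, neg_pow]
      ring
    rw [heq] at h
    simpa using h
  | succ k IH =>
    intro t
    set R : ℝ := ‖t‖ + 1 with hRdef
    have hR : 0 ≤ R := by positivity
    set r : ℝ := (‖z‖ + 1)/2 with hrdef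
    have hr0 : 0 < r := by positivity
    have hr1 : r < 1 := by simp only [hrdef]; linarith
    have hzr : ‖z‖ ≤ r := by simp only [hrdef]; linarith
    set U := Metric.ball (0:ℂ) R with hU
    have htU : t ∈ U := by
      rw [hU, Metric.mem_ball, dist_zero_right, hRdef]; linarith
    set F : ℕ → ℂ → ℂ :=
      fun m s => iteratedDeriv k (fun y => poch y m) s * (-z)^m / m.factorial with hF
    have hu := summable_u R r hR hr0 hr1 k
    have hdiffF : ∀ m : ℕ, DifferentiableOn ℂ (F m) U := by
      intro m
      exact (((differentiable_iteratedDeriv_poch m k).mul_const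
        ((-z)^m)).div_const _).differentiableOn
    have hF_le : ∀ (m : ℕ) (s : ℂ), s ∈ U →
        ‖F m s‖ ≤ ((m:ℝ)+1)^k * (∏ i ∈ Finset.range m, (R + 1 + i)) * r^m / m.factorial := by
      intro m s hs
      rw [hU, Metric.mem_ball, dist_zero_right] at hs
      have hb := poch_iteratedDeriv_bound R hR m k s hs.le
      have hfm : (0:ℝ) < m.factorial := by exact_mod_cast m.factorial_pos
      have h1 : ‖F m s‖ = ‖iteratedDeriv k (fun y => poch y m) s‖ * ‖z‖^m / m.factorial := by
        simp [hF, norm_div, norm_mul, norm_pow]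
      rw [h1]
      have h2 : ‖iteratedDeriv k (fun y => poch y m) s‖ * ‖z‖^m
          ≤ (((m:ℝ)+1)^k * ∏ i ∈ Finset.range m, (R + 1 + i)) * r^m := by
        apply mul_le_mul hb (pow_le_pow_left₀ (norm_nonneg z) hzr m)
          (pow_nonneg (norm_nonneg z) m)
        positivity
      calc ‖iteratedDeriv k (fun y => poch y m) s‖ * ‖z‖^m / m.factorial
          ≤ (((m:ℝ)+1)^k * ∏ i ∈ Finset.range m, (R + 1 + i)) * r^m / m.factorial := by
            exact div_le_div_of_nonneg_right h2 hfm.le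
      _ = ((m:ℝ)+1)^k * (∏ i ∈ Finset.range m, (R + 1 + i)) * r^m / m.factorial := by ring
    have hds := Complex.hasSum_deriv_of_summable_norm hu hdiffF Metric.isOpen_ball hF_le htU
    -- identify the sum function with the closed form
    have heq : (fun s : ℂ => ∑' m, F m s)
        = fun s : ℂ => (-L)^k * Complex.exp (-(s*L)) := by
      funext s
      exact (IH s).tsum_eq
    rw [heq] at hds
    -- compute the derivative of the closed form
    have hG : HasDerivAt (fun s : ℂ => (-L)^k * Complex.exp (-(s*L)))
        ((-L)^(k+1) * Complex.exp (-(t*L))) t := by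
      have h1 : HasDerivAt (fun s : ℂ => -(s*L)) (-L) t := by
        have h0 := ((hasDerivAt_id t).mul_const L).neg
        rw [one_mul] at h0
        exact h0
      have h2 := h1.cexp
      have h3 := h2.const_mul ((-L)^k)
      have : (-L)^k * (Complex.exp (-(t*L)) * -L) = (-L)^(k+1) * Complex.exp (-(t*L)) := by
        rw [pow_succ]; ring
      rwa [this] at h3
    rw [hG.deriv] at hds
    -- identify termwise derivatives
    have hterm : (fun m : ℕ => deriv (F m) t)
        = fun m : ℕ => iteratedDeriv (k+1) (fun s => poch s m) t * (-z)^m / m.factorial := by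
      funext m
      have hd : HasDerivAt (F m)
          (deriv (iteratedDeriv k (fun y => poch y m)) t * (-z)^m / m.factorial) t := by
        exact (((differentiable_iteratedDeriv_poch m k t).hasDerivAt).mul_const
          ((-z)^m)).div_const _
      rw [hd.deriv]
      congr 1
      rw [iteratedDeriv_succ]
    rw [hterm] at hds
    exact hds


/-- Generating function of the derivatives of the Pochhammer symbol:
`∑ₘ k! P_m^{(k)}(t) (−z)ᵐ/m! = (−1)ᵏ (1+z)^{−t} [log(1+z)]ᵏ` for `|z| < 1`
(principal branch). -/
theorem P_generating (k : ℕ) (t z : ℂ) (hz : ‖z‖ < 1) :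
    HasSum (fun m : ℕ => (k.factorial : ℂ) * P m k t * (-z) ^ m / (m.factorial : ℂ))
      ((-1) ^ k * (1 + z) ^ (-t) * (Complex.log (1 + z)) ^ k) := by
  have hz' : ‖z‖ < 1 := hz
  have h := main_hasSum z hz' k t
  have heq : (fun m : ℕ => (k.factorial : ℂ) * P m k t * (-z) ^ m / (m.factorial : ℂ))
      = fun m : ℕ => iteratedDeriv k (fun s => poch s m) t * (-z)^m / m.factorial := by
    funext m
    have hkfac : (k.factorial : ℂ) ≠ 0 := by exact_mod_cast k.factorial_pos.ne'
    simp only [P]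
    field_simp
  rw [heq]
  have hrhs : (-Complex.log (1+z))^k * Complex.exp (-(t * Complex.log (1+z)))
      = (-1) ^ k * (1 + z) ^ (-t) * (Complex.log (1 + z)) ^ k := by
    rw [Complex.cpow_def_of_ne_zero (one_add_ne_zero hz'), neg_pow]
    rw [show Complex.log (1+z) * (-t) = -(t * Complex.log (1+z)) by ring]
    ring
  rw [← hrhs]
  exact h
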